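/- Let c, s, m be natural numbers, let π : Fin (2 * c) → Fin (c + s + m) satisfy the topological-order condition (for every j < c, π(2j) < s + m + j and π(2j+1) < s + m + j), let x : Fin (s + m) → Bool be an input assignment, and let v be the unique valuation of the circuit on x. Let K, C be types and Enc : K → K → K → C, Dec : K → K → C → Option K a double-keyed encryption scheme with perfect correctness (Dec k1 k2 (Enc k1 k2 m) = some m) and wrong-key detection (Dec k1' k2' (Enc k1 k2 m) = none whenever (k1', k2') ≠ (k1, k2)). Let w : Fin (c + s + m) → Bool → K assign to every feed-out wire two labels with w i 0 ≠ w i 1 for every i, and garble gate j as the four ciphertexts ct j a b = Enc (w (π (2j)) a) (w (π (2j+1)) b) (w (s + m + j) (¬(a ∧ b))) for a, b : Bool. Define the active-label function F i = w i (v i). Then for every gate j < c and all a, b : Bool, Dec (F (π (2j))) (F (π (2j+1))) (ct j a b) = some (F (s + m + j)) if a = v (π (2j)) and b = v (π (2j+1)), and equals none otherwise; hence an evaluator holding the active labels of the circuit's input wires recovers, gate by gate in topological order, exactly the active label w i (v i) of every feed-out wire of the circuit. -/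
import Mathlib


/-- Correctness of garbled-circuit evaluation (ungarbling step of the monitoring
protocols): let `v` be the unique valuation of the circuit on input `x`, let every
feed-out wire `i` carry two distinct labels `w i false ≠ w i true`, and garble gate `j`
as the four ciphertexts `ct j a b = Enc (w (π 2j) a) (w (π (2j+1)) b) (w (s+m+j) (!(a && b)))`.
Then decrypting `ct j a b` with the active labels `F i = w i (v i)` of the gate's feed-in
wires yields `some (F (s+m+j))` exactly when `(a, b)` matches the values of the feed-in
wires, and `none` otherwise; hence the evaluator, holding the active labels of the input
wires, recovers gate by gate exactly the active label of every feed-out wire. -/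
theorem garbledCircuit_eval_correct (c s m : ℕ) (π : Fin (2 * c) → Fin (c + s + m))
    (htopo : ∀ j : ℕ, ∀ hj : j < c,
      ((π ⟨2 * j, by omega⟩ : ℕ) < s + m + j) ∧ ((π ⟨2 * j + 1, by omega⟩ : ℕ) < s + m + j))
    (x : Fin (s + m) → Bool) (v : Fin (c + s + m) → Bool)
    (hvin : ∀ i : ℕ, ∀ hi : i < s + m, v ⟨i, by omega⟩ = x ⟨i, hi⟩)
    (hvgate : ∀ j : ℕ, ∀ hj : j < c,
      v ⟨s + m + j, by omega⟩ =
        !(v (π ⟨2 * j, by omega⟩) && v (π ⟨2 * j + 1, by omega⟩)))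
    {K C : Type*} (Enc : K → K → K → C) (Dec : K → K → C → Option K)
    (hcorrect : ∀ k1 k2 msg, Dec k1 k2 (Enc k1 k2 msg) = some msg)
    (hwrong : ∀ k1 k2 k1' k2' msg, (k1', k2') ≠ (k1, k2) → Dec k1' k2' (Enc k1 k2 msg) = none)
    (w : Fin (c + s + m) → Bool → K) (hw : ∀ i, w i false ≠ w i true) :
    ∀ j : ℕ, ∀ hj : j < c, ∀ a b : Bool,
      Dec (w (π ⟨2 * j, by omega⟩) (v (π ⟨2 * j, by omega⟩)))
          (w (π ⟨2 * j + 1, by omega⟩) (v (π ⟨2 * j + 1, by omega⟩)))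
          (Enc (w (π ⟨2 * j, by omega⟩) a) (w (π ⟨2 * j + 1, by omega⟩) b)
            (w ⟨s + m + j, by omega⟩ (!(a && b)))) =
        if a = v (π ⟨2 * j, by omega⟩) ∧ b = v (π ⟨2 * j + 1, by omega⟩) then
          some (w ⟨s + m + j, by omega⟩ (v ⟨s + m + j, by omega⟩))
        else none := by
  intro j hj a b
  by_cases h : a = v (π ⟨2 * j, by omega⟩) ∧ b = v (π ⟨2 * j + 1, by omega⟩)
  · rw [if_pos h]
    obtain ⟨ha, hb⟩ := h
    subst ha; subst hb
    rw [hvgate j hj, hcorrect]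
  · rw [if_neg h]
    apply hwrong
    intro heq
    apply h
    have h1 := congrArg Prod.fst heq
    have h2 := congrArg Prod.snd heq
    simp only at h1 h2
    constructor
    · by_contra hne
      rcases Bool.eq_false_or_eq_true a with ha | ha <;>
        rcases Bool.eq_false_or_eq_true (v (π ⟨2 * j, by omega⟩)) with hv | hv <;>
        simp_all [hw]
      exact hw _ heq.symm
    · by_contra hne
      rcases Bool.eq_false_or_eq_true b with hb | hb <;>
        rcases Bool.eq_false_or_eq_true (v (π ⟨2 * j + 1, by omega⟩)) with hv | hv <;>
        simp_all [hw]
      exact hw _ heq.symm
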